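/- With the deterministic setup below, if m_i := inf_{t∈[0,1]} σ_min( J_{/i}( t β̂ + (1−t) β̂_{/i} ) ) > 0, then ‖β̂_{/i} − β̂‖₂² ≤ ( ℓ̇(y_i ∣ x_iᵀβ̂) / m_i )² · ‖x_i‖₂²; and if m_{ij} := inf_{t∈[0,1]} σ_min( J_{/ij}( t β̂_{/i} + (1−t) β̂_{/ij} ) ) > 0, then ‖β̂_{/i} − β̂_{/ij}‖₂² ≤ ( ℓ̇(y_j ∣ x_jᵀβ̂_{/i}) / m_{ij} )² · ‖x_j‖₂². -/

import Mathlib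

open Matrix

noncomputable section

/-- Euclidean dot product on `Fin p → ℝ`. -/
def dotp {p : ℕ} (v w : Fin p → ℝ) : ℝ := ∑ k, v k * w k

/-- Smallest eigenvalue of a symmetric matrix, expressed as the infimum of the Rayleigh
quotient over the unit sphere. -/
def minEig {p : ℕ} (A : Matrix (Fin p) (Fin p) ℝ) : ℝ :=
  ⨅ v : {v : Fin p → ℝ // ∑ k, v k ^ 2 = 1}, dotp v.1 (A.mulVec v.1)

/-- The Jacobian `J_{/i}(θ) = λ ∇²r(θ) + X_{/i}ᵀ diag(ℓ̈(y_k∣x_kᵀθ))_{k≠i} X_{/i}` of the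
leave-`i`-out optimality system (here for an arbitrary index set `s` of retained rows). -/
def jacb {n p : ℕ} (x : Fin n → (Fin p → ℝ)) (y : Fin n → ℝ) (ddl : ℝ → ℝ → ℝ)
    (lam : ℝ) (hessr : (Fin p → ℝ) → Matrix (Fin p) (Fin p) ℝ)
    (s : Finset (Fin n)) (θ : Fin p → ℝ) : Matrix (Fin p) (Fin p) ℝ :=
  lam • hessr θ + ∑ k ∈ s, ddl (y k) (dotp (x k) θ) • vecMulVec (x k) (x k)

lemma line_hasDerivAt {p : ℕ} (β e : Fin p → ℝ) (t : ℝ) :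
    HasDerivAt (fun t : ℝ => β + t • e) e t := by
  rw [hasDerivAt_pi]
  intro m
  simpa using (hasDerivAt_mul_const (e m)).const_add (β m)

lemma dotp_line {p : ℕ} (v β e : Fin p → ℝ) (t : ℝ) :
    dotp v (β + t • e) = dotp v β + t * dotp v e := by
  simp only [dotp, Pi.add_apply, Pi.smul_apply, smul_eq_mul, mul_add, Finset.sum_add_distrib,
    Finset.mul_sum]
  congr 1
  exact Finset.sum_congr rfl fun m _ => by ring

lemma stat_eq {n p : ℕ} (y : Fin n → ℝ) (x : Fin n → (Fin p → ℝ))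
    (ℓ dℓ : ℝ → ℝ → ℝ)
    (hdℓ : ∀ a z, HasDerivAt (ℓ a) (dℓ a z) z)
    (r : (Fin p → ℝ) → ℝ) (gradr : (Fin p → ℝ) → (Fin p → ℝ))
    (hgradr : ∀ β, HasFDerivAt r
      (∑ k, gradr β k • (ContinuousLinearMap.proj k : ((Fin p → ℝ) →L[ℝ] ℝ))) β)
    (lam : ℝ) (S : Finset (Fin n)) (β : Fin p → ℝ)
    (hstat : HasFDerivAt (fun β => (∑ k ∈ S, ℓ (y k) (dotp (x k) β)) + lam * r β)
      (0 : (Fin p → ℝ) →L[ℝ] ℝ) β) (e : Fin p → ℝ) :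
    (∑ k ∈ S, dℓ (y k) (dotp (x k) β) * dotp (x k) e) + lam * dotp (gradr β) e = 0 := by
  set line : ℝ → (Fin p → ℝ) := fun t => β + t • e with hline_def
  have hline : HasDerivAt line e 0 := line_hasDerivAt β e 0
  have hline0 : line 0 = β := by simp [hline_def]
  -- way 1: composite derivative is 0
  have way1 : HasDerivAt (fun t => (∑ k ∈ S, ℓ (y k) (dotp (x k) (line t))) + lam * r (line t))
      ((0 : (Fin p → ℝ) →L[ℝ] ℝ) e) 0 := by
    exact HasFDerivAt.comp_hasDerivAt 0 (hline0 ▸ hstat) hline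
  -- way 2: explicit derivative
  have hterm : ∀ k ∈ S, HasDerivAt (fun t => ℓ (y k) (dotp (x k) (line t)))
      (dℓ (y k) (dotp (x k) β) * dotp (x k) e) 0 := by
    intro k _
    have hinner : HasDerivAt (fun t => dotp (x k) (line t)) (dotp (x k) e) 0 := by
      have h1 : (fun t => dotp (x k) (line t)) = fun t => dotp (x k) β + t * dotp (x k) e := by
        funext t; simp [hline_def, dotp_line]
      rw [h1]
      simpa using (hasDerivAt_mul_const (dotp (x k) e)).const_add (dotp (x k) β)
    have hpt : dotp (x k) β = ((fun t => dotp (x k) (line t)) 0) := by simp [hline0]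
    have := HasDerivAt.comp (𝕜 := ℝ) 0 (hpt ▸ hdℓ (y k) (dotp (x k) β)) hinner
    simpa [Function.comp_def, hline0] using this
  have hrpart : HasDerivAt (fun t => r (line t)) (dotp (gradr β) e) 0 := by
    have h := HasFDerivAt.comp_hasDerivAt 0 (hline0 ▸ hgradr β) hline
    have heq : (∑ k, gradr β k • (ContinuousLinearMap.proj k : ((Fin p → ℝ) →L[ℝ] ℝ))) e
        = dotp (gradr β) e := by
      simp [ContinuousLinearMap.sum_apply, dotp]
    rw [hline0, heq] at h
    exact h
  have way2 : HasDerivAt (fun t => (∑ k ∈ S, ℓ (y k) (dotp (x k) (line t))) + lam * r (line t))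
      ((∑ k ∈ S, dℓ (y k) (dotp (x k) β) * dotp (x k) e) + lam * dotp (gradr β) e) 0 :=
    (HasDerivAt.fun_sum hterm).add (hrpart.const_mul lam)
  have := way2.unique way1
  simpa using this
lemma minEig_mul_le {p : ℕ} (A : Matrix (Fin p) (Fin p) ℝ) (hpos : 0 < minEig A)
    (u : Fin p → ℝ) : minEig A * (∑ k, u k ^ 2) ≤ dotp u (A.mulVec u) := by
  set Q := ∑ k, u k ^ 2 with hQdef
  have hQ0 : 0 ≤ Q := Finset.sum_nonneg fun k _ => sq_nonneg _
  rcases eq_or_lt_of_le hQ0 with hQ | hQ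
  · -- Q = 0 means u = 0
    have hu : ∀ k, u k = 0 := by
      intro k
      have := (Finset.sum_eq_zero_iff_of_nonneg (fun k _ => sq_nonneg (u k))).mp hQ.symm k
        (Finset.mem_univ k)
      exact pow_eq_zero_iff (two_ne_zero) |>.mp this
    have hz : dotp u (A.mulVec u) = 0 :=
      Finset.sum_eq_zero fun k _ => by rw [hu k]; ring
    rw [hz, ← hQ]; simp
  · have hbdd : BddBelow (Set.range fun v : {v : Fin p → ℝ // ∑ k, v k ^ 2 = 1} =>
        dotp v.1 (A.mulVec v.1)) := by
      by_contra h
      rw [minEig, Real.iInf_of_not_bddBelow h] at hpos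
      exact lt_irrefl 0 hpos
    set nq := Real.sqrt Q with hnq
    have hnqpos : 0 < nq := Real.sqrt_pos.mpr hQ
    have hnqsq : nq ^ 2 = Q := Real.sq_sqrt hQ0
    have hvunit : ∑ k, (nq⁻¹ • u) k ^ 2 = 1 := by
      simp only [Pi.smul_apply, smul_eq_mul, mul_pow]
      rw [← Finset.mul_sum, ← hQdef, ← hnqsq]
      field_simp
    have hle := ciInf_le hbdd (⟨nq⁻¹ • u, hvunit⟩ :
      {v : Fin p → ℝ // ∑ k, v k ^ 2 = 1})
    have hray : dotp (nq⁻¹ • u) (A.mulVec (nq⁻¹ • u)) = Q⁻¹ * dotp u (A.mulVec u) := by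
      rw [Matrix.mulVec_smul]
      have : ∀ v w : Fin p → ℝ, ∀ a : ℝ, dotp (a • v) (a • w) = a ^ 2 * dotp v w := by
        intro v w a
        simp only [dotp, Pi.smul_apply, smul_eq_mul, Finset.mul_sum]
        exact Finset.sum_congr rfl fun m _ => by ring
      rw [this, ← hnqsq]
      rw [inv_pow]
    have h2 : minEig A ≤ Q⁻¹ * dotp u (A.mulVec u) := by
      rw [hray] at hle; exact hle
    calc minEig A * Q ≤ (Q⁻¹ * dotp u (A.mulVec u)) * Q := by
          exact mul_le_mul_of_nonneg_right h2 hQ0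
      _ = dotp u (A.mulVec u) := by field_simp

lemma dotp_jacb {n p : ℕ} (x : Fin n → (Fin p → ℝ)) (y : Fin n → ℝ) (ddl : ℝ → ℝ → ℝ)
    (lam : ℝ) (hessr : (Fin p → ℝ) → Matrix (Fin p) (Fin p) ℝ)
    (S : Finset (Fin n)) (θ u : Fin p → ℝ) :
    dotp u ((jacb x y ddl lam hessr S θ).mulVec u)
      = (∑ k ∈ S, ddl (y k) (dotp (x k) θ) * dotp (x k) u * dotp (x k) u)
        + lam * dotp ((hessr θ).mulVec u) u := by
  simp only [jacb, dotp, Matrix.mulVec, dotProduct, Matrix.add_apply,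
    Matrix.smul_apply, Matrix.sum_apply, Matrix.vecMulVec_apply, smul_eq_mul,
    mul_add, add_mul, Finset.sum_mul, Finset.mul_sum, Finset.sum_add_distrib]
  rw [add_comm]
  congr 1
  · calc (∑ m : Fin p, ∑ m' : Fin p, ∑ k ∈ S,
          u m * (ddl (y k) (∑ j, x k j * θ j) * (x k m * x k m') * u m'))
        = ∑ m : Fin p, ∑ k ∈ S, ∑ m' : Fin p,
            u m * (ddl (y k) (∑ j, x k j * θ j) * (x k m * x k m') * u m') :=
          Finset.sum_congr rfl fun m _ => Finset.sum_comm
      _ = ∑ k ∈ S, ∑ m : Fin p, ∑ m' : Fin p,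
            u m * (ddl (y k) (∑ j, x k j * θ j) * (x k m * x k m') * u m') :=
          Finset.sum_comm
      _ = ∑ k ∈ S, ∑ m' : Fin p, ∑ m : Fin p,
            ddl (y k) (∑ j, x k j * θ j) * (x k m * u m) * (x k m' * u m') :=
          Finset.sum_congr rfl fun k _ => Finset.sum_comm.trans
            (Finset.sum_congr rfl fun m' _ => Finset.sum_congr rfl fun m _ => by ring)
  · refine Finset.sum_congr rfl fun m _ => Finset.sum_congr rfl fun m' _ => by ring


lemma line_hasDerivAt' {p : ℕ} (β e : Fin p → ℝ) (t : ℝ) :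
    HasDerivAt (fun t : ℝ => β + t • e) e t := by
  rw [hasDerivAt_pi]
  intro m
  simpa using (hasDerivAt_mul_const (e m)).const_add (β m)

lemma dotp_line' {p : ℕ} (v β e : Fin p → ℝ) (t : ℝ) :
    dotp v (β + t • e) = dotp v β + t * dotp v e := by
  simp only [dotp, Pi.add_apply, Pi.smul_apply, smul_eq_mul, mul_add, Finset.sum_add_distrib,
    Finset.mul_sum]
  congr 1
  exact Finset.sum_congr rfl fun m _ => by ring

lemma core {n p : ℕ} (y : Fin n → ℝ) (x : Fin n → (Fin p → ℝ))
    (dℓ ddℓ : ℝ → ℝ → ℝ)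
    (hddℓ : ∀ a z, HasDerivAt (dℓ a) (ddℓ a z) z)
    (gradr : (Fin p → ℝ) → (Fin p → ℝ))
    (hessr : (Fin p → ℝ) → Matrix (Fin p) (Fin p) ℝ)
    (hhessr : ∀ β, HasFDerivAt gradr
      (LinearMap.toContinuousLinearMap (Matrix.toLin' (hessr β))) β)
    (lam : ℝ) (S : Finset (Fin n)) (β1 β2 : Fin p → ℝ) (x0 : Fin p → ℝ) (c : ℝ)
    (hG2 : ∀ e, (∑ k ∈ S, dℓ (y k) (dotp (x k) β2) * dotp (x k) e)
      + lam * dotp (gradr β2) e = 0)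
    (hG1 : ∀ e, (∑ k ∈ S, dℓ (y k) (dotp (x k) β1) * dotp (x k) e)
      + lam * dotp (gradr β1) e = -(c * dotp x0 e))
    (hM : 0 < ⨅ t : Set.Icc (0:ℝ) 1,
      minEig (jacb x y ddℓ lam hessr S (t.1 • β1 + (1 - t.1) • β2))) :
    (∑ k, (β2 k - β1 k) ^ 2)
      ≤ (c / (⨅ t : Set.Icc (0:ℝ) 1,
          minEig (jacb x y ddℓ lam hessr S (t.1 • β1 + (1 - t.1) • β2)))) ^ 2
        * ∑ k, (x0 k) ^ 2 := by
  set M := ⨅ t : Set.Icc (0:ℝ) 1,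
      minEig (jacb x y ddℓ lam hessr S (t.1 • β1 + (1 - t.1) • β2)) with hMdef
  set u : Fin p → ℝ := β1 - β2 with hudef
  set Q := ∑ k, u k ^ 2 with hQdef
  set X := ∑ k, (x0 k) ^ 2 with hXdef
  have hX0 : 0 ≤ X := Finset.sum_nonneg fun k _ => sq_nonneg _
  have hQ0 : 0 ≤ Q := Finset.sum_nonneg fun k _ => sq_nonneg _
  have hgoal_eq : (∑ k, (β2 k - β1 k) ^ 2) = Q := by
    refine Finset.sum_congr rfl fun k _ => ?_
    simp only [hudef, Pi.sub_apply]; ring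
  rw [hgoal_eq]
  rcases eq_or_lt_of_le hQ0 with hQ | hQ
  · rw [← hQ]; positivity
  -- σ t = β2 + t • u, equals the segment point
  set σ : ℝ → (Fin p → ℝ) := fun t => β2 + t • u with hσdef
  have hσeq : ∀ t : ℝ, t • β1 + (1 - t) • β2 = σ t := by
    intro t; funext m
    simp only [hσdef, hudef, Pi.add_apply, Pi.smul_apply, Pi.sub_apply, smul_eq_mul]
    ring
  have hσ0 : σ 0 = β2 := by funext m; simp [hσdef]
  have hσ1 : σ 1 = β1 := by funext m; simp [hσdef, hudef]
  -- definitions of φ and E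
  set φ : ℝ → ℝ := fun t => (∑ k ∈ S, dℓ (y k) (dotp (x k) (σ t)) * dotp (x k) u)
      + lam * dotp (gradr (σ t)) u with hφdef
  set E : ℝ → ℝ := fun t =>
      (∑ k ∈ S, ddℓ (y k) (dotp (x k) (σ t)) * dotp (x k) u * dotp (x k) u)
        + lam * dotp ((hessr (σ t)).mulVec u) u with hEdef
  have hφ0 : φ 0 = 0 := by rw [hφdef]; simp only [hσ0]; exact hG2 u
  have hφ1 : φ 1 = -(c * dotp x0 u) := by rw [hφdef]; simp only [hσ1]; exact hG1 u
  -- derivative of φ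
  have hφd : ∀ t, HasDerivAt φ (E t) t := by
    intro t
    have hlinek : ∀ k : Fin n, HasDerivAt (fun t => dotp (x k) (σ t)) (dotp (x k) u) t := by
      intro k
      have h1 : (fun t => dotp (x k) (σ t)) = fun t => dotp (x k) β2 + t * dotp (x k) u := by
        funext s; simp [hσdef, dotp_line']
      rw [h1]
      simpa using (hasDerivAt_mul_const (dotp (x k) u)).const_add (dotp (x k) β2)
    have hterm : ∀ k ∈ S, HasDerivAt (fun t => dℓ (y k) (dotp (x k) (σ t)))
        (ddℓ (y k) (dotp (x k) (σ t)) * dotp (x k) u) t := by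
      intro k _
      have hpt : dotp (x k) (σ t) = ((fun s => dotp (x k) (σ s)) t) := rfl
      have := HasDerivAt.comp (𝕜 := ℝ) t (hpt ▸ hddℓ (y k) (dotp (x k) (σ t))) (hlinek k)
      simpa [Function.comp_def] using this
    have hterm' : ∀ k ∈ S, HasDerivAt (fun t => dℓ (y k) (dotp (x k) (σ t)) * dotp (x k) u)
        (ddℓ (y k) (dotp (x k) (σ t)) * dotp (x k) u * dotp (x k) u) t :=
      fun k hk => (hterm k hk).mul_const _
    have hg : HasDerivAt (fun t => gradr (σ t)) ((hessr (σ t)).mulVec u) t := by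
      have hc := HasFDerivAt.comp_hasDerivAt t (hhessr (σ t)) (line_hasDerivAt' β2 u t)
      have : (LinearMap.toContinuousLinearMap (Matrix.toLin' (hessr (σ t)))) u
          = (hessr (σ t)).mulVec u := by
        simp [Matrix.toLin'_apply]
      rw [this] at hc
      exact hc
    have hg2 : HasDerivAt (fun t => dotp (gradr (σ t)) u)
        (dotp ((hessr (σ t)).mulVec u) u) t := by
      have := HasDerivAt.fun_sum (u := (Finset.univ : Finset (Fin p)))
        (fun m _ => ((hasDerivAt_pi.mp hg) m).mul_const (u m))
      simpa [dotp] using this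
    exact (HasDerivAt.fun_sum hterm').add (hg2.const_mul lam)
  -- lower bound for E on [0,1]
  have hbddM : BddBelow (Set.range fun t : Set.Icc (0:ℝ) 1 =>
      minEig (jacb x y ddℓ lam hessr S (t.1 • β1 + (1 - t.1) • β2))) := by
    by_contra h
    rw [hMdef, Real.iInf_of_not_bddBelow h] at hM
    exact lt_irrefl 0 hM
  have hElb : ∀ t ∈ Set.Icc (0:ℝ) 1, M * Q ≤ E t := by
    intro t ht
    have hMle : M ≤ minEig (jacb x y ddℓ lam hessr S (σ t)) := by
      have := ciInf_le hbddM (⟨t, ht⟩ : Set.Icc (0:ℝ) 1)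
      rwa [hσeq t] at this
    have hmpos : 0 < minEig (jacb x y ddℓ lam hessr S (σ t)) := lt_of_lt_of_le hM hMle
    have hray := minEig_mul_le _ hmpos u
    rw [dotp_jacb] at hray
    calc M * Q ≤ minEig (jacb x y ddℓ lam hessr S (σ t)) * Q :=
          mul_le_mul_of_nonneg_right hMle hQ0
      _ ≤ E t := by rw [hEdef, ← hQdef] at *; exact hray
  -- monotonicity argument
  set ψ : ℝ → ℝ := fun t => φ t - M * Q * t with hψdef
  have hψd : ∀ t, HasDerivAt ψ (E t - M * Q) t := by
    intro t
    have h2 : HasDerivAt (fun t : ℝ => M * Q * t) (M * Q) t := by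
      simpa using (hasDerivAt_id t).const_mul (M * Q)
    exact (hφd t).sub h2
  have hmono : MonotoneOn ψ (Set.Icc 0 1) := by
    apply monotoneOn_of_deriv_nonneg (convex_Icc 0 1)
    · exact fun t _ => ((hψd t).differentiableAt.continuousAt).continuousWithinAt
    · exact fun t _ => (hψd t).differentiableAt.differentiableWithinAt
    · intro t ht
      rw [interior_Icc] at ht
      rw [(hψd t).deriv]
      have := hElb t (Set.mem_Icc_of_Ioo ht)
      linarith
  have hψle : ψ 0 ≤ ψ 1 := hmono (Set.left_mem_Icc.mpr zero_le_one)
    (Set.right_mem_Icc.mpr zero_le_one) zero_le_one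
  have hkey : M * Q ≤ -(c * dotp x0 u) := by
    have : φ 0 - 0 ≤ φ 1 - M * Q * 1 := by simpa [hψdef] using hψle
    rw [hφ0, hφ1] at this
    linarith
  -- Cauchy–Schwarz and conclusion
  have hcs : (dotp x0 u) ^ 2 ≤ X * Q := by
    rw [hXdef, hQdef]
    exact Finset.sum_mul_sq_le_sq_mul_sq Finset.univ x0 u
  have hMQpos : 0 < M * Q := mul_pos hM hQ
  have hsq : (M * Q) ^ 2 ≤ (c * dotp x0 u) ^ 2 := by
    calc (M * Q) ^ 2 ≤ (-(c * dotp x0 u)) ^ 2 := pow_le_pow_left₀ hMQpos.le hkey 2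
      _ = (c * dotp x0 u) ^ 2 := by ring
  have h5 : M ^ 2 * Q ^ 2 ≤ c ^ 2 * (X * Q) := by
    calc M ^ 2 * Q ^ 2 = (M * Q) ^ 2 := by ring
      _ ≤ (c * dotp x0 u) ^ 2 := hsq
      _ = c ^ 2 * (dotp x0 u) ^ 2 := by ring
      _ ≤ c ^ 2 * (X * Q) := mul_le_mul_of_nonneg_left hcs (sq_nonneg c)
  have h6 : M ^ 2 * Q ≤ c ^ 2 * X := by
    have := mul_le_mul_of_nonneg_right (le_refl (1 : ℝ)) hQ0
    nlinarith [hQ, h5]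
  rw [div_pow, div_mul_eq_mul_div, le_div_iff₀ (pow_pos hM 2)]
  nlinarith [h6]

/-- Lemma `perturb_i`: with fixed data, twice continuously differentiable loss
and regularizer, and stationary points `βhat`, `βloo` (leave-`i`-out), `βloo2`
(leave-`{i,j}`-out) of the full, leave-one-out and leave-two-out objectives, if the infimum
`m_i` (resp. `m_{ij}`) over `t ∈ [0,1]` of the minimal eigenvalue of the Jacobian along the
segment joining the two estimates is positive, then
`‖βloo − βhat‖₂² ≤ (ℓ̇(y_i∣x_iᵀβhat)/m_i)² ‖x_i‖₂²` and
`‖βloo − βloo2‖₂² ≤ (ℓ̇(y_j∣x_jᵀβloo)/m_{ij})² ‖x_j‖₂²`. -/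
theorem leave_one_out_perturbation_bound {n p : ℕ}
    (y : Fin n → ℝ) (x : Fin n → (Fin p → ℝ))
    (ℓ dℓ ddℓ : ℝ → ℝ → ℝ)
    (hdℓ : ∀ a z, HasDerivAt (ℓ a) (dℓ a z) z)
    (hddℓ : ∀ a z, HasDerivAt (dℓ a) (ddℓ a z) z)
    (hcontℓ : ∀ a, Continuous (ddℓ a))
    (r : (Fin p → ℝ) → ℝ) (gradr : (Fin p → ℝ) → (Fin p → ℝ))
    (hessr : (Fin p → ℝ) → Matrix (Fin p) (Fin p) ℝ)
    (hgradr : ∀ β, HasFDerivAt r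
      (∑ k, gradr β k • (ContinuousLinearMap.proj k : ((Fin p → ℝ) →L[ℝ] ℝ))) β)
    (hhessr : ∀ β, HasFDerivAt gradr
      (LinearMap.toContinuousLinearMap (Matrix.toLin' (hessr β))) β)
    (hcontr : Continuous hessr)
    (lam : ℝ) (hlam : 0 < lam)
    (i j : Fin n) (hij : i ≠ j)
    (βhat βloo βloo2 : Fin p → ℝ)
    (hstat : HasFDerivAt
      (fun β => (∑ k : Fin n, ℓ (y k) (dotp (x k) β)) + lam * r β)
      (0 : (Fin p → ℝ) →L[ℝ] ℝ) βhat)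
    (hstat_i : HasFDerivAt
      (fun β => (∑ k ∈ Finset.univ.erase i, ℓ (y k) (dotp (x k) β)) + lam * r β)
      (0 : (Fin p → ℝ) →L[ℝ] ℝ) βloo)
    (hstat_ij : HasFDerivAt
      (fun β => (∑ k ∈ (Finset.univ.erase i).erase j, ℓ (y k) (dotp (x k) β)) + lam * r β)
      (0 : (Fin p → ℝ) →L[ℝ] ℝ) βloo2) :
    (0 < (⨅ t : Set.Icc (0:ℝ) 1,
        minEig (jacb x y ddℓ lam hessr (Finset.univ.erase i)
          (t.1 • βhat + (1 - t.1) • βloo))) →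
      (∑ k, (βloo k - βhat k) ^ 2)
        ≤ (dℓ (y i) (dotp (x i) βhat)
            / (⨅ t : Set.Icc (0:ℝ) 1,
                minEig (jacb x y ddℓ lam hessr (Finset.univ.erase i)
                  (t.1 • βhat + (1 - t.1) • βloo)))) ^ 2 * ∑ k, (x i k) ^ 2)
    ∧
    (0 < (⨅ t : Set.Icc (0:ℝ) 1,
        minEig (jacb x y ddℓ lam hessr ((Finset.univ.erase i).erase j)
          (t.1 • βloo + (1 - t.1) • βloo2))) →
      (∑ k, (βloo k - βloo2 k) ^ 2)
        ≤ (dℓ (y j) (dotp (x j) βloo)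
            / (⨅ t : Set.Icc (0:ℝ) 1,
                minEig (jacb x y ddℓ lam hessr ((Finset.univ.erase i).erase j)
                  (t.1 • βloo + (1 - t.1) • βloo2)))) ^ 2 * ∑ k, (x j k) ^ 2) := by
  have hstat' : HasFDerivAt
      (fun β => (∑ k ∈ (Finset.univ : Finset (Fin n)), ℓ (y k) (dotp (x k) β)) + lam * r β)
      (0 : (Fin p → ℝ) →L[ℝ] ℝ) βhat := hstat
  have heqfull := stat_eq y x ℓ dℓ hdℓ r gradr hgradr lam Finset.univ βhat hstat'
  have heqi := stat_eq y x ℓ dℓ hdℓ r gradr hgradr lam (Finset.univ.erase i) βloo hstat_i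
  have heqij := stat_eq y x ℓ dℓ hdℓ r gradr hgradr lam
    ((Finset.univ.erase i).erase j) βloo2 hstat_ij
  constructor
  · intro hM
    have hG1 : ∀ e, (∑ k ∈ Finset.univ.erase i, dℓ (y k) (dotp (x k) βhat) * dotp (x k) e)
        + lam * dotp (gradr βhat) e
        = -((dℓ (y i) (dotp (x i) βhat)) * dotp (x i) e) := by
      intro e
      have hsplit := Finset.sum_erase_add Finset.univ
        (fun k => dℓ (y k) (dotp (x k) βhat) * dotp (x k) e) (Finset.mem_univ i)
      beta_reduce at hsplit
      have := heqfull e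
      linarith [hsplit, this]
    exact core y x dℓ ddℓ hddℓ gradr hessr hhessr lam (Finset.univ.erase i)
      βhat βloo (x i) (dℓ (y i) (dotp (x i) βhat)) (fun e => heqi e) hG1 hM
  · intro hM
    have hji : j ∈ Finset.univ.erase i := Finset.mem_erase.mpr ⟨hij.symm, Finset.mem_univ j⟩
    have hG1 : ∀ e, (∑ k ∈ (Finset.univ.erase i).erase j,
          dℓ (y k) (dotp (x k) βloo) * dotp (x k) e)
        + lam * dotp (gradr βloo) e
        = -((dℓ (y j) (dotp (x j) βloo)) * dotp (x j) e) := by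
      intro e
      have hsplit := Finset.sum_erase_add (Finset.univ.erase i)
        (fun k => dℓ (y k) (dotp (x k) βloo) * dotp (x k) e) hji
      beta_reduce at hsplit
      have := heqi e
      linarith [hsplit, this]
    rw [show (∑ k, (βloo k - βloo2 k) ^ 2) = ∑ k, (βloo2 k - βloo k) ^ 2 from
      Finset.sum_congr rfl fun k _ => by ring]
    exact core y x dℓ ddℓ hddℓ gradr hessr hhessr lam ((Finset.univ.erase i).erase j)
      βloo βloo2 (x j) (dℓ (y j) (dotp (x j) βloo)) (fun e => heqij e) hG1 hM
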